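/- arXiv:1603.02626 — 3 statements merged into one kernel-verified Lean document; each statement's English description precedes it below -/
import Mathlib

section
/- Hilbert's theorem for univariate polynomials: a polynomial p with real coefficients in one variable satisfies p(x) ≥ 0 for every real x if and only if there exist polynomials q and r with real coefficients such that p = q² + r², i.e., p is a sum of two squares of polynomials. -/
open Polynomial

lemma aux_nonneg_compl (g : Polynomial ℝ) (a : ℝ) (h : ∀ x ≠ a, 0 ≤ g.eval x) :
    ∀ x, 0 ≤ g.eval x := by
  intro x
  rcases eq_or_ne x a with rfl | hx
  · have ht : Filter.Tendsto (fun y => g.eval y) (nhdsWithin x {x}ᶜ) (nhds (g.eval x)) :=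
      (g.continuous_aeval.tendsto x).mono_left nhdsWithin_le_nhds
    refine ge_of_tendsto ht ?_
    filter_upwards [self_mem_nhdsWithin] with y hy
    exact h y hy
  · exact h x hx

lemma aux_sos : ∀ n (p : Polynomial ℝ), p.natDegree = n → (∀ x : ℝ, 0 ≤ p.eval x) →
    ∃ q r : Polynomial ℝ, p = q ^ 2 + r ^ 2 := by
  intro n
  induction n using Nat.strong_induction_on with
  | _ n IH =>
  intro p hdeg hpos
  rcases Nat.eq_zero_or_pos n with rfl | hn
  · -- constant
    obtain ⟨c, rfl⟩ : ∃ c, p = C c := ⟨p.coeff 0, eq_C_of_natDegree_eq_zero hdeg⟩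
    have h0 : 0 ≤ c := by simpa using hpos 0
    exact ⟨C (Real.sqrt c), 0, by rw [← C_pow, Real.sq_sqrt h0]; ring⟩
  · have hp0 : p ≠ 0 := by
      intro h; rw [h] at hdeg; simp at hdeg; omega
    have hdegpos : 0 < p.degree := by
      rw [← natDegree_pos_iff_degree_pos, hdeg]; exact hn
    obtain ⟨z, hz⟩ : ∃ z : ℂ, (p.map (algebraMap ℝ ℂ)).IsRoot z := by
      apply Complex.exists_root
      rwa [degree_map]
    have hz' : aeval z p = 0 := by
      rwa [aeval_def, ← eval_map]
    rcases eq_or_ne z.im 0 with him | him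
    · -- real root a
      set a := z.re with ha
      have hza : z = (algebraMap ℝ ℂ) a := by
        apply Complex.ext <;> simp [him, ha]
      have hroot : p.eval a = 0 := by
        apply (algebraMap ℝ ℂ).injective
        rw [map_zero]
        have h2 : (p.map (algebraMap ℝ ℂ)).eval ((algebraMap ℝ ℂ) a) = algebraMap ℝ ℂ (p.eval a) := by
          rw [eval_map, eval₂_at_apply]
        rw [← h2, ← hza]
        exact hz
      have hmin : IsLocalMin (fun x => p.eval x) a := by
        apply Filter.Eventually.of_forall
        intro x; simpa [hroot] using hpos x
      have hder : p.derivative.eval a = 0 := by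
        rw [← Polynomial.deriv]; exact hmin.deriv_eq_zero
      obtain ⟨q1, hq1⟩ := (dvd_iff_isRoot.mpr hroot)
      have hq1a : q1.eval a = 0 := by
        have hd1 : p.derivative = q1 + (X - C a) * q1.derivative := by
          rw [hq1, derivative_mul, derivative_sub, derivative_X, derivative_C, sub_zero, one_mul]
        have h3 : p.derivative.eval a = q1.eval a := by rw [hd1]; simp
        rw [hder] at h3; exact h3.symm
      obtain ⟨g, hgg⟩ := (dvd_iff_isRoot.mpr hq1a)
      have hpg : p = (X - C a) ^ 2 * g := by rw [hq1, hgg]; ring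
      have hg0 : g ≠ 0 := by
        intro h; rw [h, mul_zero] at hpg; exact hp0 hpg
      have hdg : g.natDegree < n := by
        have h6 : p.natDegree = 2 + g.natDegree := by
          rw [hpg, natDegree_mul (pow_ne_zero 2 (X_sub_C_ne_zero a)) hg0,
            natDegree_pow, natDegree_X_sub_C]
        omega
      have hgpos : ∀ x : ℝ, 0 ≤ g.eval x := by
        apply aux_nonneg_compl g a
        intro x hx
        have h4 := hpos x
        rw [hpg] at h4
        simp only [eval_mul, eval_pow, eval_sub, eval_X, eval_C] at h4
        have h5 : 0 < (x - a) ^ 2 := by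
          have : x - a ≠ 0 := sub_ne_zero.mpr hx
          positivity
        exact nonneg_of_mul_nonneg_right h4 h5
      obtain ⟨q, r, hqr⟩ := IH g.natDegree hdg g rfl hgpos
      exact ⟨(X - C a) * q, (X - C a) * r, by rw [hpg, hqr]; ring⟩
    · -- complex root
      obtain ⟨g, hg⟩ := p.quadratic_dvd_of_aeval_eq_zero_im_ne_zero hz' him
      set d : Polynomial ℝ := X ^ 2 - C (2 * z.re) * X + C (‖z‖ ^ 2) with hd
      have hdform : d = (X - C z.re) ^ 2 + C (z.im ^ 2) := by
        have h7 : ‖z‖ ^ 2 = z.re ^ 2 + z.im ^ 2 := by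
          rw [Complex.sq_norm, Complex.normSq_apply]; ring
        rw [hd, h7]
        simp only [C_add, C_mul, C_pow, map_ofNat]
        ring
      have hd0 : d ≠ 0 := by
        intro h
        have := congrArg (fun t => Polynomial.eval z.re t) h
        simp [hdform] at this
        exact him (by nlinarith [this])
      have hdeval : ∀ x : ℝ, 0 < d.eval x := by
        intro x
        rw [hdform]
        simp only [eval_add, eval_pow, eval_sub, eval_X, eval_C]
        positivity
      have hg0 : g ≠ 0 := by
        intro h; rw [h, mul_zero] at hg; exact hp0 hg
      have hdd : d.natDegree = 2 := by
        rw [hdform, natDegree_add_C, natDegree_pow, natDegree_X_sub_C]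
      have hdg : g.natDegree < n := by
        have h6 : p.natDegree = 2 + g.natDegree := by
          rw [hg, natDegree_mul hd0 hg0, hdd]
        omega
      have hgpos : ∀ x : ℝ, 0 ≤ g.eval x := by
        intro x
        have h4 := hpos x
        rw [hg, eval_mul] at h4
        exact nonneg_of_mul_nonneg_right h4 (hdeval x)
      obtain ⟨q, r, hqr⟩ := IH g.natDegree hdg g rfl hgpos
      refine ⟨(X - C z.re) * q - C z.im * r, (X - C z.re) * r + C z.im * q, ?_⟩
      rw [hg, hdform, hqr]
      have h9 : (C (z.im ^ 2) : Polynomial ℝ) = C z.im ^ 2 := by rw [C_pow]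
      rw [h9]
      ring

theorem nonneg_polynomial_iff_sum_of_two_squares (p : Polynomial ℝ) :
    (∀ x : ℝ, p.eval x ≥ 0) ↔ ∃ q r : Polynomial ℝ, p = q ^ 2 + r ^ 2 := by
  constructor
  · intro h
    exact aux_sos p.natDegree p rfl h
  · rintro ⟨q, r, rfl⟩ x
    simp only [eval_add, eval_pow]
    positivity
end

section
/- A univariate real polynomial p of degree at most 2d satisfies p(x) ≥ 0 for every real x if and only if there exists a positive semidefinite real symmetric matrix Q of size (d+1) × (d+1) such that p(x) = x̄ᵀ Q x̄ for every real x, where x̄ = (1, x, x², ..., x^d)ᵀ. Equivalently, the coefficient of p in each degree i satisfies pᵢ = Σ_{g+h=i} Q_{g,h}. -/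
open Polynomial

/-- A nonnegative real polynomial is a (finite) sum of squares of polynomials
of at most half the degree. -/
lemma sos_aux : ∀ n : ℕ, ∀ p : ℝ[X], p.natDegree ≤ n → (∀ x : ℝ, 0 ≤ p.eval x) →
    ∃ L : List ℝ[X], (∀ q ∈ L, 2 * q.natDegree ≤ p.natDegree) ∧
      ∀ x : ℝ, p.eval x = (L.map (fun q => (q.eval x) ^ 2)).sum := by
  intro n
  induction n using Nat.strong_induction_on with
  | _ n ih =>
    intro p hpn hnn
    rcases Nat.eq_zero_or_pos p.natDegree with h0 | hpos
    · -- constant case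
      have hpC : p = C (p.coeff 0) := (Polynomial.eq_C_of_natDegree_eq_zero h0)
      have hc : 0 ≤ p.coeff 0 := by
        have := hnn 0
        rwa [hpC, eval_C] at this
      refine ⟨[C (Real.sqrt (p.coeff 0))], ?_, ?_⟩
      · intro q hq
        simp at hq
        simp [hq]
      · intro x
        conv_lhs => rw [hpC]
        simp [Real.sq_sqrt hc]
    · -- nonconstant case: find the minimum
      obtain ⟨x₀, hx₀⟩ := p.exists_forall_norm_le
      have hmin : ∀ y : ℝ, p.eval x₀ ≤ p.eval y := by
        intro y
        have := hx₀ y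
        rwa [Real.norm_eq_abs, Real.norm_eq_abs, abs_of_nonneg (hnn x₀),
          abs_of_nonneg (hnn y)] at this
      set c := p.eval x₀ with hc
      have hc0 : 0 ≤ c := hnn x₀
      set q₀ : ℝ[X] := p - C c with hq₀
      have hq₀nn : ∀ x : ℝ, 0 ≤ q₀.eval x := by
        intro x; simp [hq₀, sub_nonneg]; exact hmin x
      have hroot : q₀.eval x₀ = 0 := by simp [hq₀, hc]
      -- derivative vanishes at the global min
      have hlocmin : IsLocalMin (fun x => q₀.eval x) x₀ := by
        apply Filter.Eventually.of_forall
        intro y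
        simp only [hq₀, eval_sub, eval_C]
        exact sub_le_sub_right (hmin y) c
      have hderiv : q₀.derivative.eval x₀ = 0 := by
        have h1 : deriv (fun x => q₀.eval x) x₀ = q₀.derivative.eval x₀ :=
          (q₀.hasDerivAt x₀).deriv
        rw [← h1, hlocmin.deriv_eq_zero]
      -- factor out (X - x₀)^2
      obtain ⟨g, hg⟩ : (X - C x₀) ∣ q₀ := (dvd_iff_isRoot).2 hroot
      have hgroot : g.eval x₀ = 0 := by
        have := hderiv
        rw [hg, derivative_mul] at this
        simpa using this
      obtain ⟨h, hh⟩ : (X - C x₀) ∣ g := (dvd_iff_isRoot).2 hgroot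
      have hfact : q₀ = (X - C x₀) ^ 2 * h := by
        rw [hg, hh]; ring
      -- h is nonnegative
      have hhnn : ∀ x : ℝ, 0 ≤ h.eval x := by
        have hne : ∀ x : ℝ, x ≠ x₀ → 0 ≤ h.eval x := by
          intro x hx
          have h1 : 0 ≤ (x - x₀) ^ 2 * h.eval x := by
            have := hq₀nn x
            rwa [hfact, eval_mul, eval_pow, eval_sub, eval_X, eval_C] at this
          have h2 : 0 < (x - x₀) ^ 2 := pow_two_pos_of_ne_zero (sub_ne_zero.mpr hx)
          nlinarith [h1, h2]
        intro x
        rcases eq_or_ne x x₀ with rfl | hx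
        swap
        · exact hne x hx
        -- limit argument at x₀
        have htend : Filter.Tendsto (fun y => h.eval y) (nhdsWithin x {x}ᶜ) (nhds (h.eval x)) :=
          ((h.continuous_aeval).tendsto x).mono_left nhdsWithin_le_nhds
        refine ge_of_tendsto htend ?_
        filter_upwards [self_mem_nhdsWithin] with y hy
        exact hne y hy
      -- degree bookkeeping
      have hq₀ne : q₀ ≠ 0 := by
        intro hz
        have : p = C c := by rw [← sub_eq_zero]; exact hz
        rw [this] at hpos
        simp at hpos
      have hdq₀ : q₀.natDegree = p.natDegree := natDegree_sub_C
      have hhne : h ≠ 0 := by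
        intro hz; rw [hz, mul_zero] at hfact; exact hq₀ne hfact
      have hdeg2 : q₀.natDegree = 2 + h.natDegree := by
        rw [hfact, natDegree_mul (pow_ne_zero _ (X_sub_C_ne_zero x₀)) hhne]
        congr 1
        simp [natDegree_pow]
      have hdh : h.natDegree < n := by omega
      obtain ⟨L, hL1, hL2⟩ := ih h.natDegree hdh h le_rfl hhnn
      refine ⟨C (Real.sqrt c) :: L.map (fun q => (X - C x₀) * q), ?_, ?_⟩
      · intro q hq
        simp only [List.mem_cons, List.mem_map] at hq
        rcases hq with rfl | ⟨r, hr, rfl⟩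
        · simp
        · have := hL1 r hr
          have hd : ((X - C x₀) * r).natDegree ≤ 1 + r.natDegree := by
            refine le_trans (natDegree_mul_le) ?_
            gcongr
            exact (natDegree_X_sub_C x₀).le
          omega
      · intro x
        have hp : p.eval x = (x - x₀) ^ 2 * h.eval x + c := by
          have : q₀.eval x = (x - x₀) ^ 2 * h.eval x := by
            rw [hfact]; simp
          simp only [hq₀, eval_sub, eval_C] at this
          linarith
        rw [hp, hL2 x]
        simp only [List.map_cons, List.sum_cons, List.map_map]
        rw [eval_C, Real.sq_sqrt hc0]
        have : (L.map ((fun q => Polynomial.eval x q ^ 2) ∘ fun q => (X - C x₀) * q)).sum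
            = (x - x₀) ^ 2 * (L.map (fun q => Polynomial.eval x q ^ 2)).sum := by
          rw [← List.sum_map_mul_left]
          congr 1
          ext q
          simp [mul_pow]
        rw [this]; ring

lemma psd_vecMulVec {m : ℕ} (v : Fin m → ℝ) : (Matrix.vecMulVec v v).PosSemidef := by
  refine Matrix.posSemidef_iff_dotProduct_mulVec.mpr ⟨?_, ?_⟩
  · ext i j
    simp [Matrix.vecMulVec_apply, Matrix.conjTranspose_apply, mul_comm]
  · intro x
    have : dotProduct (star x) (Matrix.mulVec (Matrix.vecMulVec v v) x)
        = (dotProduct v x) ^ 2 := by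
      simp only [dotProduct, Matrix.mulVec, Matrix.vecMulVec_apply, star_trivial]
      rw [sq]
      rw [Finset.sum_mul_sum]
      apply Finset.sum_congr rfl
      intro i _
      rw [Finset.mul_sum]
      apply Finset.sum_congr rfl
      intro j _
      ring
    rw [this]
    positivity

lemma psd_list_sum {m : ℕ} (L : List (Matrix (Fin m) (Fin m) ℝ))
    (h : ∀ A ∈ L, A.PosSemidef) : L.sum.PosSemidef := by
  induction L with
  | nil => simpa using Matrix.PosSemidef.zero
  | cons A L ih =>
    rw [List.sum_cons]
    exact (h A (by simp)).add (ih fun B hB => h B (by simp [hB]))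

theorem nonneg_polynomial_iff_psd_gram (d : ℕ) (p : Polynomial ℝ)
    (hdeg : p.natDegree ≤ 2 * d) :
    (∀ x : ℝ, p.eval x ≥ 0) ↔
      ∃ Q : Matrix (Fin (d + 1)) (Fin (d + 1)) ℝ, Q.PosSemidef ∧
        ∀ x : ℝ, p.eval x = ∑ g : Fin (d + 1), ∑ h : Fin (d + 1),
          Q g h * x ^ ((g : ℕ) + (h : ℕ)) := by
  constructor
  · intro hnn
    obtain ⟨L, hL1, hL2⟩ := sos_aux p.natDegree p le_rfl (fun x => hnn x)
    set v : ℝ[X] → Fin (d + 1) → ℝ := fun q i => q.coeff i with hv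
    refine ⟨(L.map (fun q => Matrix.vecMulVec (v q) (v q))).sum, ?_, ?_⟩
    · apply psd_list_sum
      intro A hA
      simp only [List.mem_map] at hA
      obtain ⟨q, _, rfl⟩ := hA
      exact psd_vecMulVec _
    · intro x
      rw [hL2 x]
      -- the double sum is additive in Q
      have key : ∀ M : List ℝ[X], (∀ q ∈ M, q ∈ L) →
          ((M.map (fun q => (q.eval x) ^ 2)).sum) =
          ∑ g : Fin (d + 1), ∑ h : Fin (d + 1),
            ((M.map (fun q => Matrix.vecMulVec (v q) (v q))).sum) g h
              * x ^ ((g : ℕ) + (h : ℕ)) := by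
        intro M
        induction M with
        | nil => simp
        | cons q M ihM =>
          intro hM
          have hq : q ∈ L := hM q (by simp)
          simp only [List.map_cons, List.sum_cons]
          rw [ihM (fun r hr => hM r (by simp [hr]))]
          have hqe : q.eval x = ∑ i : Fin (d + 1), v q i * x ^ (i : ℕ) := by
            have hdq : q.natDegree < d + 1 := by
              have := hL1 q hq
              omega
            rw [eval_eq_sum_range' hdq]
            exact (Fin.sum_univ_eq_sum_range (fun i => q.coeff i * x ^ i) (d + 1)).symm
          have hsq : (q.eval x) ^ 2 = ∑ g : Fin (d + 1), ∑ h : Fin (d + 1),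
              Matrix.vecMulVec (v q) (v q) g h * x ^ ((g : ℕ) + (h : ℕ)) := by
            rw [hqe, sq, Finset.sum_mul_sum]
            apply Finset.sum_congr rfl
            intro g _
            apply Finset.sum_congr rfl
            intro h _
            simp only [Matrix.vecMulVec_apply, pow_add]
            ring
          rw [hsq]
          simp only [Matrix.add_apply, add_mul, Finset.sum_add_distrib]
      exact key L (fun q hq => hq)
  · rintro ⟨Q, hQ, hev⟩ x
    have h2 := hQ.dotProduct_mulVec_nonneg (fun i : Fin (d + 1) => x ^ (i : ℕ))
    rw [hev x]
    refine le_trans h2 (le_of_eq ?_)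
    simp only [dotProduct, Matrix.mulVec, star_trivial]
    apply Finset.sum_congr rfl
    intro g _
    rw [Finset.mul_sum]
    apply Finset.sum_congr rfl
    intro h _
    rw [pow_add]
    ring
end

section
/- Theorem (nonnegativity on an interval): let v₁ < v₂ be real numbers. A univariate real polynomial p satisfies p(x) ≥ 0 for all x in the closed interval [v₁, v₂] if and only if there exist univariate real polynomials q and r, each a sum of squares of polynomials, such that p = (X - v₁)·q + (v₂ - X)·r. -/
open Polynomial

def IsSumOfSquares (p : Polynomial ℝ) : Prop :=
  ∃ (m : ℕ) (f : Fin m → Polynomial ℝ), p = ∑ s, (f s) ^ 2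

namespace IntervalSOSAux

lemma sos_zero : IsSumOfSquares 0 := ⟨0, ![], by simp⟩

lemma sos_one : IsSumOfSquares 1 := ⟨1, ![1], by simp⟩

lemma sos_sq (f : Polynomial ℝ) : IsSumOfSquares (f ^ 2) := ⟨1, ![f], by simp⟩

lemma sos_add {p q : Polynomial ℝ} (hp : IsSumOfSquares p) (hq : IsSumOfSquares q) :
    IsSumOfSquares (p + q) := by
  obtain ⟨m, f, rfl⟩ := hp
  obtain ⟨n, g, rfl⟩ := hq
  exact ⟨m + n, Fin.append f g, by
    rw [Fin.sum_univ_add]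
    simp [Fin.append_left, Fin.append_right]⟩

lemma sos_sq_mul (f : Polynomial ℝ) {q : Polynomial ℝ} (hq : IsSumOfSquares q) :
    IsSumOfSquares (f ^ 2 * q) := by
  obtain ⟨n, g, rfl⟩ := hq
  exact ⟨n, fun j => f * g j, by rw [Finset.mul_sum]; simp [mul_pow]⟩

lemma sos_mul {p q : Polynomial ℝ} (hp : IsSumOfSquares p) (hq : IsSumOfSquares q) :
    IsSumOfSquares (p * q) := by
  obtain ⟨m, f, rfl⟩ := hp
  induction m with
  | zero => simpa using sos_zero
  | succ k ih =>
    rw [Fin.sum_univ_succ, add_mul]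
    exact sos_add (sos_sq_mul _ hq) (ih fun i => f i.succ)

lemma sos_const {c : ℝ} (hc : 0 ≤ c) : IsSumOfSquares (C c) :=
  ⟨1, ![C (Real.sqrt c)], by simp [← C_pow, Real.sq_sqrt hc]⟩

lemma sos_eval_nonneg {p : Polynomial ℝ} (hp : IsSumOfSquares p) (x : ℝ) : 0 ≤ p.eval x := by
  obtain ⟨m, f, rfl⟩ := hp
  rw [eval_finset_sum]
  exact Finset.sum_nonneg fun i _ => by simp [sq_nonneg]

/-- The cone generated by SOS and the weights `X - v₁`, `v₂ - X`. -/
def InCone (v₁ v₂ : ℝ) (p : Polynomial ℝ) : Prop :=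
  ∃ q r : Polynomial ℝ, IsSumOfSquares q ∧ IsSumOfSquares r ∧
    p = (X - C v₁) * q + (C v₂ - X) * r

variable {v₁ v₂ : ℝ}

lemma cone_add {p p' : Polynomial ℝ} (hp : InCone v₁ v₂ p) (hp' : InCone v₁ v₂ p') :
    InCone v₁ v₂ (p + p') := by
  obtain ⟨q, r, hq, hr, rfl⟩ := hp
  obtain ⟨q', r', hq', hr', rfl⟩ := hp'
  exact ⟨q + q', r + r', sos_add hq hq', sos_add hr hr', by ring⟩

lemma key_cancel (hv : v₁ < v₂) (s : Polynomial ℝ) :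
    C (v₂ - v₁) * (C (v₂ - v₁)⁻¹ * s) = s := by
  rw [← mul_assoc, ← C_mul, mul_inv_cancel₀ (sub_ne_zero.2 hv.ne'), C_1, one_mul]

lemma cone_sos (hv : v₁ < v₂) {s : Polynomial ℝ} (hs : IsSumOfSquares s) :
    InCone v₁ v₂ s := by
  refine ⟨C (v₂ - v₁)⁻¹ * s, C (v₂ - v₁)⁻¹ * s, ?_, ?_, ?_⟩
  · exact sos_mul (sos_const (by simp [le_of_lt, hv, inv_nonneg, sub_nonneg])) hs
  · exact sos_mul (sos_const (by simp [le_of_lt, hv, inv_nonneg, sub_nonneg])) hs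
  · conv_lhs => rw [← key_cancel hv s]
    rw [map_sub]; ring

lemma cone_sos_mul {s p : Polynomial ℝ} (hs : IsSumOfSquares s) (hp : InCone v₁ v₂ p) :
    InCone v₁ v₂ (s * p) := by
  obtain ⟨q, r, hq, hr, rfl⟩ := hp
  exact ⟨s * q, s * r, sos_mul hs hq, sos_mul hs hr, by ring⟩

lemma cone_X_sub : InCone v₁ v₂ (X - C v₁) := ⟨1, 0, sos_one, sos_zero, by ring⟩

lemma cone_sub_X : InCone v₁ v₂ (C v₂ - X) := ⟨0, 1, sos_zero, sos_one, by ring⟩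

lemma cone_const (hv : v₁ < v₂) {c : ℝ} (hc : 0 ≤ c) : InCone v₁ v₂ (C c) :=
  cone_sos hv (sos_const hc)

lemma cone_base (hv : v₁ < v₂) : InCone v₁ v₂ ((X - C v₁) * (C v₂ - X)) := by
  refine ⟨C (v₂ - v₁)⁻¹ * (C v₂ - X) ^ 2, C (v₂ - v₁)⁻¹ * (X - C v₁) ^ 2, ?_, ?_, ?_⟩
  · exact sos_mul (sos_const (by simp [le_of_lt, hv, inv_nonneg, sub_nonneg])) (sos_sq _)
  · exact sos_mul (sos_const (by simp [le_of_lt, hv, inv_nonneg, sub_nonneg])) (sos_sq _)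
  · conv_lhs => rw [← key_cancel hv ((X - C v₁) * (C v₂ - X))]
    rw [map_sub]; ring

lemma cone_mul (hv : v₁ < v₂) {p p' : Polynomial ℝ} (hp : InCone v₁ v₂ p)
    (hp' : InCone v₁ v₂ p') : InCone v₁ v₂ (p * p') := by
  obtain ⟨q, r, hq, hr, rfl⟩ := hp
  obtain ⟨q', r', hq', hr', rfl⟩ := hp'
  have e : ((X - C v₁) * q + (C v₂ - X) * r) * ((X - C v₁) * q' + (C v₂ - X) * r')
      = (X - C v₁) ^ 2 * (q * q') + (C v₂ - X) ^ 2 * (r * r')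
        + (q * r' + q' * r) * ((X - C v₁) * (C v₂ - X)) := by ring
  rw [e]
  exact cone_add (cone_add (cone_sos hv (sos_sq_mul _ (sos_mul hq hq')))
      (cone_sos hv (sos_sq_mul _ (sos_mul hr hr'))))
    (cone_sos_mul (sos_add (sos_mul hq hr') (sos_mul hq' hr)) (cone_base hv))

lemma cone_linear_left (hv : v₁ < v₂) {a : ℝ} (ha : a ≤ v₁) : InCone v₁ v₂ (X - C a) := by
  have h : (X - C a : Polynomial ℝ) = (X - C v₁) + C (v₁ - a) := by rw [map_sub]; ring
  rw [h]
  exact cone_add cone_X_sub (cone_const hv (by linarith))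

lemma cone_linear_right (hv : v₁ < v₂) {a : ℝ} (ha : v₂ ≤ a) : InCone v₁ v₂ (C a - X) := by
  have h : (C a - X : Polynomial ℝ) = (C v₂ - X) + C (a - v₂) := by rw [map_sub]; ring
  rw [h]
  exact cone_add cone_sub_X (cone_const hv (by linarith))

lemma closed_nonneg (p : Polynomial ℝ) : IsClosed {x : ℝ | 0 ≤ p.eval x} :=
  isClosed_le continuous_const p.continuous

lemma nonneg_of_closure {p : Polynomial ℝ} {s t : Set ℝ}
    (hsub : ∀ x ∈ s, 0 ≤ p.eval x) (hcl : t ⊆ closure s) : ∀ x ∈ t, 0 ≤ p.eval x := by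
  intro x hx
  have : closure s ⊆ {x : ℝ | 0 ≤ p.eval x} := by
    rw [← (closed_nonneg p).closure_eq]
    exact closure_mono hsub
  exact this (hcl hx)

lemma main (hv : v₁ < v₂) : ∀ n (p : Polynomial ℝ), p.natDegree ≤ n →
    (∀ x ∈ Set.Icc v₁ v₂, 0 ≤ p.eval x) → InCone v₁ v₂ p := by
  intro n
  induction n with
  | zero =>
    intro p hdeg hpos
    rw [Polynomial.eq_C_of_natDegree_le_zero hdeg]
    refine cone_const hv ?_
    have := hpos v₁ ⟨le_refl _, hv.le⟩
    rw [Polynomial.eq_C_of_natDegree_le_zero hdeg] at this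
    simpa using this
  | succ n ih =>
    intro p hdeg hpos
    by_cases hle : p.natDegree ≤ n
    · exact ih p hle hpos
    push_neg at hle
    have hd : p.natDegree = n + 1 := le_antisymm hdeg hle
    have hp0 : p ≠ 0 := fun h => by simp [h] at hd
    by_cases hroot : ∃ a ∈ Set.Icc v₁ v₂, p.eval a = 0
    · obtain ⟨a, ha, hpa⟩ := hroot
      obtain ⟨p₁, hfac⟩ := dvd_iff_isRoot.mpr hpa
      have hp₁0 : p₁ ≠ 0 := by rintro rfl; simp at hfac; exact hp0 hfac
      have hdeg₁ : p.natDegree = 1 + p₁.natDegree := by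
        rw [hfac, natDegree_mul (X_sub_C_ne_zero a) hp₁0, natDegree_X_sub_C]
      rcases eq_or_lt_of_le ha.1 with h₁ | h₁
      · -- a = v₁
        rw [← h₁] at hfac
        have hpos₁ : ∀ x ∈ Set.Icc v₁ v₂, 0 ≤ p₁.eval x := by
          apply nonneg_of_closure (s := Set.Ioc v₁ v₂)
          · intro x hx
            have h := hpos x (Set.Ioc_subset_Icc_self hx)
            rw [hfac, eval_mul, eval_sub, eval_X, eval_C] at h
            nlinarith [sub_pos.2 hx.1]
          · rw [closure_Ioc hv.ne]
        rw [hfac]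
        exact cone_mul hv cone_X_sub (ih p₁ (by omega) hpos₁)
      rcases eq_or_lt_of_le ha.2 with h₂ | h₂
      · -- a = v₂
        rw [h₂] at hfac
        have hfac2 : p = (C v₂ - X) * (-p₁) := by rw [hfac]; ring
        have hpos₁ : ∀ x ∈ Set.Icc v₁ v₂, 0 ≤ (-p₁).eval x := by
          apply nonneg_of_closure (s := Set.Ico v₁ v₂)
          · intro x hx
            have h := hpos x (Set.Ico_subset_Icc_self hx)
            rw [hfac, eval_mul, eval_sub, eval_X, eval_C] at h
            rw [eval_neg]
            nlinarith [sub_pos.2 hx.2]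
          · rw [closure_Ico hv.ne]
        rw [hfac2]
        exact cone_mul hv cone_sub_X
          (ih (-p₁) (by rw [natDegree_neg]; omega) hpos₁)
      · -- v₁ < a < v₂
        have hright : ∀ x ∈ Set.Icc a v₂, 0 ≤ p₁.eval x := by
          apply nonneg_of_closure (s := Set.Ioc a v₂)
          · intro x hx
            have hxmem : x ∈ Set.Icc v₁ v₂ := ⟨le_trans ha.1 hx.1.le, hx.2⟩
            have h := hpos x hxmem
            rw [hfac, eval_mul, eval_sub, eval_X, eval_C] at h
            nlinarith [sub_pos.2 hx.1]
          · rw [closure_Ioc h₂.ne]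
        have hleft : ∀ x ∈ Set.Icc v₁ a, 0 ≤ (-p₁).eval x := by
          apply nonneg_of_closure (s := Set.Ico v₁ a)
          · intro x hx
            have hxmem : x ∈ Set.Icc v₁ v₂ := ⟨hx.1, le_trans hx.2.le ha.2⟩
            have h := hpos x hxmem
            rw [hfac, eval_mul, eval_sub, eval_X, eval_C] at h
            rw [eval_neg]
            nlinarith [sub_pos.2 hx.2]
          · rw [closure_Ico h₁.ne]
        have hz : p₁.eval a = 0 := by
          have h1 := hright a ⟨le_refl _, h₂.le⟩
          have h2 := hleft a ⟨h₁.le, le_refl _⟩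
          rw [eval_neg] at h2
          linarith
        obtain ⟨p₂, hfac₂⟩ := dvd_iff_isRoot.mpr hz
        have hp₂0 : p₂ ≠ 0 := by rintro rfl; simp at hfac₂; exact hp₁0 hfac₂
        have hdeg₂ : p₁.natDegree = 1 + p₂.natDegree := by
          rw [hfac₂, natDegree_mul (X_sub_C_ne_zero a) hp₂0, natDegree_X_sub_C]
        have hfacc : p = (X - C a) ^ 2 * p₂ := by rw [hfac, hfac₂]; ring
        have hpos₂ : ∀ x ∈ Set.Icc v₁ v₂, 0 ≤ p₂.eval x := by
          apply nonneg_of_closure (s := Set.Ico v₁ a ∪ Set.Ioc a v₂)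
          · rintro x (hx | hx)
            · have hxmem : x ∈ Set.Icc v₁ v₂ := ⟨hx.1, le_trans hx.2.le ha.2⟩
              have h := hpos x hxmem
              rw [hfacc, eval_mul, eval_pow, eval_sub, eval_X, eval_C] at h
              have hne : x - a ≠ 0 := sub_ne_zero.2 (ne_of_lt hx.2)
              have hsq : 0 < (x - a) ^ 2 := by positivity
              nlinarith
            · have hxmem : x ∈ Set.Icc v₁ v₂ := ⟨le_trans ha.1 hx.1.le, hx.2⟩
              have h := hpos x hxmem
              rw [hfacc, eval_mul, eval_pow, eval_sub, eval_X, eval_C] at h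
              have hne : x - a ≠ 0 := sub_ne_zero.2 (ne_of_gt hx.1)
              have hsq : 0 < (x - a) ^ 2 := by positivity
              nlinarith
          · rw [closure_union, closure_Ico h₁.ne, closure_Ioc h₂.ne,
              Set.Icc_union_Icc_eq_Icc h₁.le h₂.le]
        rw [hfacc]
        exact cone_sos_mul (sos_sq _) (ih p₂ (by omega) hpos₂)
    · push_neg at hroot
      by_cases hrr : ∃ a : ℝ, p.eval a = 0
      · obtain ⟨a, hpa⟩ := hrr
        have hanot : a ∉ Set.Icc v₁ v₂ := fun h => (hroot a h) hpa
        obtain ⟨p₁, hfac⟩ := dvd_iff_isRoot.mpr hpa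
        have hp₁0 : p₁ ≠ 0 := by rintro rfl; simp at hfac; exact hp0 hfac
        have hdeg₁ : p.natDegree = 1 + p₁.natDegree := by
          rw [hfac, natDegree_mul (X_sub_C_ne_zero a) hp₁0, natDegree_X_sub_C]
        rw [Set.mem_Icc, not_and_or, not_le, not_le] at hanot
        rcases hanot with h | h
        · -- a < v₁
          have hpos₁ : ∀ x ∈ Set.Icc v₁ v₂, 0 ≤ p₁.eval x := by
            intro x hx
            have hp := hpos x hx
            rw [hfac, eval_mul, eval_sub, eval_X, eval_C] at hp
            nlinarith [lt_of_lt_of_le h hx.1]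
          rw [hfac]
          exact cone_mul hv (cone_linear_left hv h.le) (ih p₁ (by omega) hpos₁)
        · -- v₂ < a
          have hfac2 : p = (C a - X) * (-p₁) := by rw [hfac]; ring
          have hpos₁ : ∀ x ∈ Set.Icc v₁ v₂, 0 ≤ (-p₁).eval x := by
            intro x hx
            have hp := hpos x hx
            rw [hfac, eval_mul, eval_sub, eval_X, eval_C] at hp
            rw [eval_neg]
            nlinarith [lt_of_le_of_lt hx.2 h]
          rw [hfac2]
          exact cone_mul hv (cone_linear_right hv h.le)
            (ih (-p₁) (by rw [natDegree_neg]; omega) hpos₁)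
      · push_neg at hrr
        -- no real root: take a complex root
        have hdegpos : 0 < p.natDegree := by omega
        obtain ⟨z, hz⟩ : ∃ z : ℂ, aeval z p = 0 :=
          IsAlgClosed.exists_aeval_eq_zero ℂ p
            (natDegree_pos_iff_degree_pos.mp hdegpos).ne'
        have him : z.im ≠ 0 := by
          intro h0
          apply hrr z.re
          have hzre : (z.re : ℂ) = z := by
            apply Complex.ext <;> simp [h0]
          have : aeval ((z.re : ℝ) : ℂ) p = 0 := by rw [hzre]; exact hz
          have h2 : ((p.eval z.re : ℝ) : ℂ) = 0 := by
            rw [← this]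
            exact (aeval_algebraMap_apply_eq_algebraMap_eval z.re p).symm
          exact_mod_cast h2
        obtain ⟨p₂, hfac⟩ := p.quadratic_dvd_of_aeval_eq_zero_im_ne_zero hz him
        have hq : (X ^ 2 - C (2 * z.re) * X + C (‖z‖ ^ 2) : Polynomial ℝ)
            = (X - C z.re) ^ 2 + (C z.im) ^ 2 := by
          have h2 : ‖z‖ ^ 2 = z.re ^ 2 + z.im ^ 2 := by
            rw [Complex.sq_norm, Complex.normSq_apply]; ring
          rw [h2, C_add, C_pow, C_pow, C_mul]
          have h3 : (C (2:ℝ) : Polynomial ℝ) = 2 := map_ofNat C 2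
          rw [h3]; ring
        have hqsos : IsSumOfSquares (X ^ 2 - C (2 * z.re) * X + C (‖z‖ ^ 2) : Polynomial ℝ) := by
          rw [hq]; exact sos_add (sos_sq _) (sos_sq _)
        have hqdeg : (X ^ 2 - C (2 * z.re) * X + C (‖z‖ ^ 2) : Polynomial ℝ).natDegree = 2 := by
          rw [hq, ← C_pow, natDegree_add_C, natDegree_pow, natDegree_X_sub_C]
        have hqne : (X ^ 2 - C (2 * z.re) * X + C (‖z‖ ^ 2) : Polynomial ℝ) ≠ 0 := by
          intro h0; rw [h0] at hqdeg; simp at hqdeg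
        have hqpos : ∀ x : ℝ, 0 < (X ^ 2 - C (2 * z.re) * X + C (‖z‖ ^ 2) : Polynomial ℝ).eval x := by
          intro x
          rw [hq]
          simp only [eval_add, eval_pow, eval_sub, eval_X, eval_C]
          positivity
        have hp₂0 : p₂ ≠ 0 := by rintro rfl; simp at hfac; exact hp0 hfac
        have hdeg₂ : p.natDegree = 2 + p₂.natDegree := by
          rw [hfac, natDegree_mul hqne hp₂0, hqdeg]
        have hpos₂ : ∀ x ∈ Set.Icc v₁ v₂, 0 ≤ p₂.eval x := by
          intro x hx
          have hp := hpos x hx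
          rw [hfac, eval_mul] at hp
          nlinarith [hqpos x]
        rw [hfac]
        exact cone_sos_mul hqsos (ih p₂ (by omega) hpos₂)

end IntervalSOSAux

theorem nonneg_on_interval_iff_weighted_sos (v₁ v₂ : ℝ) (hv : v₁ < v₂)
    (p : Polynomial ℝ) :
    (∀ x ∈ Set.Icc v₁ v₂, p.eval x ≥ 0) ↔
      ∃ q r : Polynomial ℝ, IsSumOfSquares q ∧ IsSumOfSquares r ∧
        p = (X - C v₁) * q + (C v₂ - X) * r := by
  constructor
  · intro h
    exact IntervalSOSAux.main hv p.natDegree p le_rfl h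
  · rintro ⟨q, r, hq, hr, rfl⟩ x hx
    simp only [eval_add, eval_mul, eval_sub, eval_X, eval_C, ge_iff_le]
    have h1 := IntervalSOSAux.sos_eval_nonneg hq x
    have h2 := IntervalSOSAux.sos_eval_nonneg hr x
    have := hx.1; have := hx.2
    nlinarith
end
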